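/- Let n and k be integers with n ≥ 3 and ⌈n/3⌉ < k < n, and let C_n denote the cycle on n vertices. Then the k-dominating graph D_k(C_n) is Eulerian if and only if either n = 7 and k = 4, or n = 3 and k = 2. -/

import Mathlib

open SimpleGraph

/-- `D` is a dominating set of `G`: every vertex not in `D` has a neighbour in `D`. -/
def IsDomSet {V : Type*} (G : SimpleGraph V) (D : Set V) : Prop :=
  ∀ v ∉ D, ∃ u ∈ D, G.Adj u v

/-- The dominating graph of `G`: vertices are dominating sets of `G`, two dominating
sets are adjacent iff their symmetric difference has exactly one element. -/
def DomGraph {V : Type*} (G : SimpleGraph V) :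
    SimpleGraph {D : Set V // IsDomSet G D} where
  Adj A B := (symmDiff A.1 B.1).ncard = 1
  symm := ⟨fun A B h => by
    have h' : (symmDiff A.1 B.1).ncard = 1 := h
    show (symmDiff B.1 A.1).ncard = 1
    rwa [symmDiff_comm]⟩
  loopless := ⟨fun A h => by
    have h' : (symmDiff A.1 A.1).ncard = 1 := h
    simp [symmDiff_self, Set.bot_eq_empty] at h'⟩

/-- The `k`-dominating graph of `G`: vertices are dominating sets of `G` of cardinality
at most `k`, two such sets are adjacent iff their symmetric difference has exactly one
element. -/
def KDomGraph {V : Type*} (G : SimpleGraph V) (k : ℕ) :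
    SimpleGraph {D : Set V // IsDomSet G D ∧ D.ncard ≤ k} where
  Adj A B := (symmDiff A.1 B.1).ncard = 1
  symm := ⟨fun A B h => by
    have h' : (symmDiff A.1 B.1).ncard = 1 := h
    show (symmDiff B.1 A.1).ncard = 1
    rwa [symmDiff_comm]⟩
  loopless := ⟨fun A h => by
    have h' : (symmDiff A.1 A.1).ncard = 1 := h
    simp [symmDiff_self, Set.bot_eq_empty] at h'⟩

/-- A graph is Eulerian iff every vertex has even degree and any two edges lie in the
same connected component (i.e. at most one component contains an edge). -/
def IsEulerian {W : Type*} (H : SimpleGraph W) : Prop :=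
  (∀ v : W, Even (H.neighborSet v).ncard) ∧
  ∀ u v x y : W, H.Adj u v → H.Adj x y → H.Reachable u x

variable {V : Type*}

lemma isDomSet_mono {G : SimpleGraph V} {D E : Set V} (h : D ⊆ E) (hD : IsDomSet G D) :
    IsDomSet G E := fun v hv =>
  let ⟨u, hu, ha⟩ := hD v (fun hvD => hv (h hvD)); ⟨u, h hu, ha⟩

lemma kdom_neighborSet_ncard (G : SimpleGraph V) (k : ℕ) (D : Set V)
    (hD : IsDomSet G D ∧ D.ncard ≤ k) :
    ((KDomGraph G k).neighborSet ⟨D, hD⟩).ncard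
      = {x : V | IsDomSet G (symmDiff D {x}) ∧ (symmDiff D {x}).ncard ≤ k}.ncard := by
  set S := {x : V | IsDomSet G (symmDiff D {x}) ∧ (symmDiff D {x}).ncard ≤ k} with hS
  have key : Subtype.val '' ((KDomGraph G k).neighborSet ⟨D, hD⟩)
      = (fun x => symmDiff D {x}) '' S := by
    ext E
    constructor
    · rintro ⟨⟨E', hE'⟩, hadj, rfl⟩
      have h1 : (symmDiff D E').ncard = 1 := hadj
      obtain ⟨x, hx⟩ := Set.ncard_eq_one.mp h1
      have hEx : E' = symmDiff D {x} := by
        rw [← hx, symmDiff_symmDiff_cancel_left]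
      exact ⟨x, by rw [hS]; simp only [Set.mem_setOf_eq, ← hEx]; exact hE', hEx.symm⟩
    · rintro ⟨x, hx, rfl⟩
      refine ⟨⟨symmDiff D {x}, hx⟩, ?_, rfl⟩
      show (symmDiff D (symmDiff D {x})).ncard = 1
      rw [symmDiff_symmDiff_cancel_left, Set.ncard_singleton]
  have h2 : ((KDomGraph G k).neighborSet ⟨D, hD⟩).ncard
      = (Subtype.val '' ((KDomGraph G k).neighborSet ⟨D, hD⟩)).ncard :=
    (Set.ncard_image_of_injective _ Subtype.val_injective).symm
  rw [h2, key, Set.ncard_image_of_injOn]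
  intro x _ y _ hxy
  have : ({x} : Set V) = {y} := by
    have := congrArg (fun t => symmDiff D t) hxy
    simpa [symmDiff_symmDiff_cancel_left] using hxy
  simpa using this

lemma symmDiff_singleton_of_mem {D : Set V} {x : V} (h : x ∈ D) :
    symmDiff D {x} = D \ {x} := by
  ext y
  simp only [Set.mem_symmDiff, Set.mem_singleton_iff, Set.mem_diff]
  constructor
  · rintro (⟨hy, hne⟩ | ⟨rfl, hy⟩)
    · exact ⟨hy, hne⟩
    · exact absurd h hy
  · rintro ⟨hy, hne⟩; exact Or.inl ⟨hy, hne⟩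

lemma symmDiff_singleton_of_not_mem {D : Set V} {x : V} (h : x ∉ D) :
    symmDiff D {x} = insert x D := by
  ext y
  simp only [Set.mem_symmDiff, Set.mem_singleton_iff, Set.mem_insert_iff]
  constructor
  · rintro (⟨hy, _⟩ | ⟨rfl, _⟩)
    · exact Or.inr hy
    · exact Or.inl rfl
  · rintro (rfl | hy)
    · exact Or.inr ⟨rfl, h⟩
    · exact Or.inl ⟨hy, fun he => h (he ▸ hy)⟩

lemma not_eulerian_of_odd_vertex {G : SimpleGraph V} {k : ℕ} (D : Set V)
    (hD : IsDomSet G D ∧ D.ncard ≤ k)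
    (hodd : ¬ Even (({x : V | IsDomSet G (symmDiff D {x}) ∧
      (symmDiff D {x}).ncard ≤ k}).ncard)) :
    ¬ IsEulerian (KDomGraph G k) := by
  rintro ⟨he, -⟩
  exact hodd (by rw [← kdom_neighborSet_ncard G k D hD]; exact he ⟨D, hD⟩)

/-- the case of an "independent-style" witness: no vertex is removable, every
vertex is addable; degree is `|V| - |D|`. -/
lemma not_eulerian_indep [Fintype V] {G : SimpleGraph V} {k : ℕ} (D : Set V)
    (hdom : IsDomSet G D) (hcard : D.ncard < k)
    (hrem : ∀ x ∈ D, ¬ IsDomSet G (D \ {x}))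
    (hodd : ¬ Even (Fintype.card V - D.ncard)) :
    ¬ IsEulerian (KDomGraph G k) := by
  apply not_eulerian_of_odd_vertex D ⟨hdom, le_of_lt hcard⟩
  have hSeq : {x : V | IsDomSet G (symmDiff D {x}) ∧ (symmDiff D {x}).ncard ≤ k} = Dᶜ := by
    ext x
    simp only [Set.mem_setOf_eq, Set.mem_compl_iff]
    constructor
    · rintro ⟨h1, _⟩ hx
      rw [symmDiff_singleton_of_mem hx] at h1
      exact hrem x hx h1
    · intro hx
      rw [symmDiff_singleton_of_not_mem hx]
      refine ⟨isDomSet_mono (Set.subset_insert x D) hdom, ?_⟩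
      rw [Set.ncard_insert_of_notMem hx]
      omega
  rw [hSeq]
  have h1 := Set.ncard_add_ncard_compl D
  rw [Nat.card_eq_fintype_card] at h1
  have h3 : Dᶜ.ncard = Fintype.card V - D.ncard := by omega
  rw [h3]
  exact hodd

/-- the case of a maximum-size witness with a unique removable vertex: degree 1. -/
lemma not_eulerian_full [Fintype V] {G : SimpleGraph V} {k : ℕ} (D : Set V)
    (hdom : IsDomSet G D) (hcard : D.ncard = k) (x0 : V) (hx0 : x0 ∈ D)
    (hx0dom : IsDomSet G (D \ {x0}))
    (huniq : ∀ x ∈ D, IsDomSet G (D \ {x}) → x = x0) :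
    ¬ IsEulerian (KDomGraph G k) := by
  apply not_eulerian_of_odd_vertex D ⟨hdom, le_of_eq hcard⟩
  have hSeq : {x : V | IsDomSet G (symmDiff D {x}) ∧ (symmDiff D {x}).ncard ≤ k} = {x0} := by
    ext x
    simp only [Set.mem_setOf_eq, Set.mem_singleton_iff]
    constructor
    · rintro ⟨h1, h2⟩
      by_cases hx : x ∈ D
      · rw [symmDiff_singleton_of_mem hx] at h1
        exact huniq x hx h1
      · exfalso
        rw [symmDiff_singleton_of_not_mem hx, Set.ncard_insert_of_notMem hx] at h2
        omega
    · rintro rfl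
      rw [symmDiff_singleton_of_mem hx0]
      exact ⟨hx0dom, le_trans (Set.ncard_diff_singleton_le D _) (le_of_eq hcard)⟩
  rw [hSeq, Set.ncard_singleton]
  decide

/-- adjacency in the cycle graph, in terms of values. -/
lemma cycle_adj {n : ℕ} (hn : 3 ≤ n) (u v : Fin n) :
    (cycleGraph n).Adj u v ↔ (v.val = u.val + 1 ∨ u.val = v.val + 1 ∨
      (u.val = 0 ∧ v.val = n - 1) ∨ (v.val = 0 ∧ u.val = n - 1)) := by
  rw [cycleGraph_adj']
  have hsub : ∀ a b : Fin n, (a - b).val = 1 ↔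
      (a.val = b.val + 1 ∨ (b.val = n - 1 ∧ a.val = 0)) := by
    intro a b
    have hab : (a - b).val = (n - b.val + a.val) % n := rfl
    rw [hab]
    rcases le_or_gt b.val a.val with h | h
    · have h1 : n - b.val + a.val = (a.val - b.val) + n := by omega
      rw [h1, Nat.add_mod_right, Nat.mod_eq_of_lt (by omega)]
      omega
    · have h2 : n - b.val + a.val < n := by omega
      rw [Nat.mod_eq_of_lt h2]
      omega
  rw [hsub, hsub]
  omega

lemma ncard_range_fin {n t : ℕ} (f : Fin t → Fin n) (hf : Function.Injective f) :
    (Set.range f).ncard = t := by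
  rw [← Set.image_univ, Set.ncard_image_of_injective _ hf, Set.ncard_univ,
    Nat.card_eq_fintype_card, Fintype.card_fin]

lemma witness1 (m k : ℕ) (hm : 1 ≤ m) (hk : m + 1 < k) :
    ¬ IsEulerian (KDomGraph (cycleGraph (3*m+2)) k) := by
  set n := 3*m+2 with hn
  have hn3 : 3 ≤ n := by omega
  set D : Set (Fin n) := {v | v.val % 3 = 1} with hD
  have hDcard : D.ncard = m + 1 := by
    have : D = Set.range (fun j : Fin (m+1) => (⟨3*j.val+1, by omega⟩ : Fin n)) := by
      ext v
      simp only [hD, Set.mem_setOf_eq, Set.mem_range]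
      constructor
      · intro hv
        exact ⟨⟨v.val / 3, by omega⟩, by apply Fin.ext; simp; omega⟩
      · rintro ⟨j, rfl⟩; simp
    rw [this]
    apply ncard_range_fin
    intro a b hab
    have := congrArg Fin.val hab
    simp at this
    exact Fin.ext (by omega)
  have hdom : IsDomSet (cycleGraph n) D := by
    intro v hv
    simp only [hD, Set.mem_setOf_eq] at hv
    by_cases h0 : v.val % 3 = 0
    · refine ⟨⟨v.val+1, by omega⟩, by simp [hD]; omega, ?_⟩
      rw [cycle_adj hn3]
      simp; try omega
    · refine ⟨⟨v.val-1, by omega⟩, by simp [hD]; omega, ?_⟩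
      rw [cycle_adj hn3]
      simp; try omega
  apply not_eulerian_indep D hdom (by omega)
  · intro x hx hcontra
    simp only [hD, Set.mem_setOf_eq] at hx
    obtain ⟨u, hu, hadj⟩ := hcontra x (by simp)
    simp only [Set.mem_diff, hD, Set.mem_setOf_eq, Set.mem_singleton_iff] at hu
    rw [cycle_adj hn3] at hadj
    omega
  · rw [hDcard, Fintype.card_fin]
    intro hE
    rw [Nat.even_iff] at hE
    omega

lemma witness2 (m k : ℕ) (hm : 2 ≤ m) (hk : k = m + 1) :
    ¬ IsEulerian (KDomGraph (cycleGraph (3*m)) k) := by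
  set n := 3*m with hn
  have hn3 : 3 ≤ n := by omega
  set D : Set (Fin n) := {v | v.val % 3 = 0 ∨ v.val = 1} with hD
  set x0 : Fin n := ⟨1, by omega⟩ with hx0
  have hDcard : D.ncard = m + 1 := by
    have hins : D = insert x0 {v : Fin n | v.val % 3 = 0} := by
      ext v
      simp only [hD, Set.mem_setOf_eq, Set.mem_insert_iff, hx0, Fin.ext_iff]
      omega
    rw [hins, Set.ncard_insert_of_notMem (by simp [hx0])]
    have : {v : Fin n | v.val % 3 = 0} =
        Set.range (fun j : Fin m => (⟨3*j.val, by omega⟩ : Fin n)) := by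
      ext v
      simp only [Set.mem_setOf_eq, Set.mem_range]
      constructor
      · intro hv
        exact ⟨⟨v.val / 3, by omega⟩, by apply Fin.ext; simp; omega⟩
      · rintro ⟨j, rfl⟩; simp; try omega
    rw [this, ncard_range_fin]
    intro a b hab
    have := congrArg Fin.val hab
    simp at this
    exact Fin.ext (by omega)
  have hdom : IsDomSet (cycleGraph n) D := by
    intro v hv
    simp only [hD, Set.mem_setOf_eq] at hv
    push_neg at hv
    by_cases h1 : v.val % 3 = 1
    · refine ⟨⟨v.val-1, by omega⟩, by simp [hD]; try omega, ?_⟩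
      rw [cycle_adj hn3]; simp; try omega
    · rcases Nat.lt_or_ge v.val (n-1) with h2 | h2
      · refine ⟨⟨v.val+1, by omega⟩, by simp [hD]; try omega, ?_⟩
        rw [cycle_adj hn3]; simp; try omega
      · refine ⟨⟨0, by omega⟩, by simp [hD], ?_⟩
        rw [cycle_adj hn3]; simp
        have := v.isLt
        omega
  apply not_eulerian_full D hdom (by omega) x0 (by simp [hD, hx0])
  · intro v hv
    simp only [Set.mem_diff, Set.mem_singleton_iff, hD, Set.mem_setOf_eq, not_and,
      Decidable.not_not] at hv
    have hvne : ¬ (v.val % 3 = 0) := by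
      intro h
      have := congrArg Fin.val (hv (Or.inl h))
      simp [hx0] at this
      omega
    by_cases h1 : v.val % 3 = 1
    · have hv2 : v.val ≠ 2 := by omega
      refine ⟨⟨v.val-1, by omega⟩, ⟨by simp [hD]; omega, ?_⟩, ?_⟩
      · intro h
        have := congrArg Fin.val h
        simp [hx0] at this
        omega
      · rw [cycle_adj hn3]; simp; try omega
    · rcases Nat.lt_or_ge v.val (n-1) with h2 | h2
      · refine ⟨⟨v.val+1, by omega⟩, ⟨by simp [hD]; omega, ?_⟩, ?_⟩
        · intro h
          have := congrArg Fin.val h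
          simp [hx0] at this
          omega
        · rw [cycle_adj hn3]; simp; try omega
      · refine ⟨⟨0, by omega⟩, ⟨by simp [hD], ?_⟩, ?_⟩
        · intro h
          have := congrArg Fin.val h
          simp [hx0] at this
        · rw [cycle_adj hn3]; simp
          have := v.isLt
          omega
  · intro x hx hdomx
    by_contra hne
    have hxval : x.val ≠ 1 := fun h => hne (Fin.ext (by simp [hx0]; omega))
    have hx3 : x.val % 3 = 0 := by
      rcases hx with h | h
      · exact h
      · omega
    have hxlt := x.isLt
    rcases Nat.eq_zero_or_pos x.val with hx0' | hx0'
    · obtain ⟨u, hu, hadj⟩ := hdomx ⟨n-1, by omega⟩ (by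
        simp only [Set.mem_diff, Set.mem_singleton_iff, hD, Set.mem_setOf_eq]
        intro hcon
        rcases hcon.1 with h | h <;> omega)
      simp only [Set.mem_diff, Set.mem_singleton_iff, hD, Set.mem_setOf_eq] at hu
      have huval : u.val ≠ x.val := fun h => hu.2 (Fin.ext h)
      have := u.isLt
      rw [cycle_adj hn3] at hadj
      simp at hadj
      omega
    · obtain ⟨u, hu, hadj⟩ := hdomx ⟨x.val+1, by omega⟩ (by
        simp only [Set.mem_diff, Set.mem_singleton_iff, hD, Set.mem_setOf_eq]
        intro hcon
        rcases hcon.1 with h | h <;> omega)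
      simp only [Set.mem_diff, Set.mem_singleton_iff, hD, Set.mem_setOf_eq] at hu
      have huval : u.val ≠ x.val := fun h => hu.2 (Fin.ext h)
      have := u.isLt
      rw [cycle_adj hn3] at hadj
      simp at hadj
      omega

lemma witness3 (m k : ℕ) (hm : 2 ≤ m) (hk : m + 2 ≤ k) :
    ¬ IsEulerian (KDomGraph (cycleGraph (3*m)) k) := by
  set n := 3*m with hn
  have hn3 : 3 ≤ n := by omega
  set D : Set (Fin n) := {v | v.val = 0 ∨ v.val = 2 ∨ (v.val % 3 = 1 ∧ v.val ≠ 1)} with hD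
  have hDcard : D.ncard = m + 1 := by
    have hins : D = insert (⟨0, by omega⟩ : Fin n) (insert (⟨2, by omega⟩ : Fin n)
        (Set.range (fun j : Fin (m-1) => (⟨3*j.val+4, by omega⟩ : Fin n)))) := by
      ext v
      simp only [hD, Set.mem_setOf_eq, Set.mem_insert_iff, Set.mem_range, Fin.ext_iff]
      constructor
      · rintro (h | h | ⟨h1, h2⟩)
        · left; simpa using h
        · right; left; simpa using h
        · right; right
          exact ⟨⟨(v.val-4)/3, by omega⟩, by simp; omega⟩
      · rintro (h | h | ⟨j, hj⟩)
        · omega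
        · omega
        · have := j.isLt
          omega
    rw [hins, Set.ncard_insert_of_notMem, Set.ncard_insert_of_notMem, ncard_range_fin]
    · omega
    · intro a b hab
      have := congrArg Fin.val hab
      simp at this
      exact Fin.ext (by omega)
    · simp only [Set.mem_range, not_exists]
      intro j h
      have := congrArg Fin.val h
      simp at this
    · simp only [Set.mem_insert_iff, Set.mem_range, not_or, not_exists]
      refine ⟨?_, ?_⟩
      · intro h
        have := congrArg Fin.val h
        simp at this
      · intro j h
        have := congrArg Fin.val h
        simp at this
  have hdom : IsDomSet (cycleGraph n) D := by
    intro v hv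
    simp only [hD, Set.mem_setOf_eq] at hv
    push_neg at hv
    by_cases h1 : v.val % 3 = 1
    · refine ⟨⟨0, by omega⟩, by simp [hD], ?_⟩
      rw [cycle_adj hn3]; simp
      have := v.isLt
      omega
    · by_cases h0 : v.val % 3 = 0
      · refine ⟨⟨v.val+1, by omega⟩, by simp [hD]; omega, ?_⟩
        rw [cycle_adj hn3]; simp; try omega
      · refine ⟨⟨v.val-1, by omega⟩, by simp [hD]; omega, ?_⟩
        rw [cycle_adj hn3]; simp; try omega
  apply not_eulerian_indep D hdom (by omega)
  · intro x hx hcontra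
    obtain ⟨u, hu, hadj⟩ := hcontra x (by simp)
    simp only [Set.mem_diff, hD, Set.mem_setOf_eq, Set.mem_singleton_iff] at hu hx
    have huval : u.val ≠ x.val := fun h => hu.2 (Fin.ext h)
    have := u.isLt
    have := x.isLt
    rw [cycle_adj hn3] at hadj
    omega
  · rw [hDcard, Fintype.card_fin]
    intro hE
    rw [Nat.even_iff] at hE
    omega

lemma witness6 (m k : ℕ) (hm : 3 ≤ m) (hk : m + 3 ≤ k) :
    ¬ IsEulerian (KDomGraph (cycleGraph (3*m+1)) k) := by
  set n := 3*m+1 with hn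
  have hn3 : 3 ≤ n := by omega
  set D : Set (Fin n) := {v | v.val = 0 ∨ v.val = 2 ∨ v.val = 4 ∨ v.val = 6 ∨
    (v.val % 3 = 2 ∧ 8 ≤ v.val)} with hD
  have hDcard : D.ncard = m + 2 := by
    have hins : D = insert (⟨0, by omega⟩ : Fin n) (insert (⟨2, by omega⟩ : Fin n)
        (insert (⟨4, by omega⟩ : Fin n) (insert (⟨6, by omega⟩ : Fin n)
        (Set.range (fun j : Fin (m-2) => (⟨3*j.val+8, by omega⟩ : Fin n)))))) := by
      ext v
      simp only [hD, Set.mem_setOf_eq, Set.mem_insert_iff, Set.mem_range, Fin.ext_iff]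
      constructor
      · rintro (h | h | h | h | ⟨h1, h2⟩)
        · exact Or.inl (by omega)
        · exact Or.inr (Or.inl (by omega))
        · exact Or.inr (Or.inr (Or.inl (by omega)))
        · exact Or.inr (Or.inr (Or.inr (Or.inl (by omega))))
        · refine Or.inr (Or.inr (Or.inr (Or.inr ⟨⟨(v.val-8)/3, by omega⟩, by simp; omega⟩)))
      · rintro (h | h | h | h | ⟨j, hj⟩)
        · omega
        · omega
        · omega
        · omega
        · have := j.isLt; omega
    rw [hins, Set.ncard_insert_of_notMem, Set.ncard_insert_of_notMem,
      Set.ncard_insert_of_notMem, Set.ncard_insert_of_notMem, ncard_range_fin]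
    · omega
    · intro a b hab
      have := congrArg Fin.val hab
      simp at this
      exact Fin.ext (by omega)
    all_goals
      simp only [Set.mem_insert_iff, Set.mem_range, not_or, not_exists, Fin.ext_iff]
      repeat' apply And.intro
      all_goals first
        | (intro j; have := j.isLt; omega)
        | omega
  have hdom : IsDomSet (cycleGraph n) D := by
    intro v hv
    simp only [hD, Set.mem_setOf_eq] at hv
    push_neg at hv
    have hvlt := v.isLt
    by_cases h2 : v.val % 3 = 2
    · refine ⟨⟨4, by omega⟩, by simp [hD], ?_⟩
      rw [cycle_adj hn3]; simp; omega
    · by_cases h0 : v.val % 3 = 0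
      · by_cases h3 : v.val = 3
        · refine ⟨⟨2, by omega⟩, by simp [hD], ?_⟩
          rw [cycle_adj hn3]; simp; omega
        · refine ⟨⟨v.val-1, by omega⟩, by simp [hD]; omega, ?_⟩
          rw [cycle_adj hn3]; simp; try omega
      · by_cases h1 : v.val = 1
        · refine ⟨⟨0, by omega⟩, by simp [hD], ?_⟩
          rw [cycle_adj hn3]; simp; omega
        · by_cases h7 : v.val = 7
          · refine ⟨⟨6, by omega⟩, by simp [hD], ?_⟩
            rw [cycle_adj hn3]; simp; omega
          · refine ⟨⟨v.val+1, by omega⟩, by simp [hD]; omega, ?_⟩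
            rw [cycle_adj hn3]; simp; try omega
  apply not_eulerian_indep D hdom (by omega)
  · intro x hx hcontra
    obtain ⟨u, hu, hadj⟩ := hcontra x (by simp)
    simp only [Set.mem_diff, hD, Set.mem_setOf_eq, Set.mem_singleton_iff] at hu hx
    have huval : u.val ≠ x.val := fun h => hu.2 (Fin.ext h)
    have := u.isLt
    have := x.isLt
    rw [cycle_adj hn3] at hadj
    omega
  · rw [hDcard, Fintype.card_fin]
    intro hE
    rw [Nat.even_iff] at hE
    omega

lemma witness5 (m k : ℕ) (hm : 3 ≤ m) (hk : k = m + 2) :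
    ¬ IsEulerian (KDomGraph (cycleGraph (3*m+1)) k) := by
  set n := 3*m+1 with hn
  have hn3 : 3 ≤ n := by omega
  set D : Set (Fin n) := {v | v.val = 0 ∨ v.val = 1 ∨ v.val = 2 ∨ v.val = 5 ∨
    (v.val % 3 = 1 ∧ 7 ≤ v.val)} with hD
  set x0 : Fin n := ⟨1, by omega⟩ with hx0
  have hDcard : D.ncard = m + 2 := by
    have hins : D = insert (⟨0, by omega⟩ : Fin n) (insert (⟨1, by omega⟩ : Fin n)
        (insert (⟨2, by omega⟩ : Fin n) (insert (⟨5, by omega⟩ : Fin n)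
        (Set.range (fun j : Fin (m-2) => (⟨3*j.val+7, by omega⟩ : Fin n)))))) := by
      ext v
      simp only [hD, Set.mem_setOf_eq, Set.mem_insert_iff, Set.mem_range, Fin.ext_iff]
      constructor
      · rintro (h | h | h | h | ⟨h1, h2⟩)
        · exact Or.inl (by omega)
        · exact Or.inr (Or.inl (by omega))
        · exact Or.inr (Or.inr (Or.inl (by omega)))
        · exact Or.inr (Or.inr (Or.inr (Or.inl (by omega))))
        · refine Or.inr (Or.inr (Or.inr (Or.inr ⟨⟨(v.val-7)/3, by omega⟩, by simp; omega⟩)))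
      · rintro (h | h | h | h | ⟨j, hj⟩)
        · omega
        · omega
        · omega
        · omega
        · have := j.isLt; omega
    rw [hins, Set.ncard_insert_of_notMem, Set.ncard_insert_of_notMem,
      Set.ncard_insert_of_notMem, Set.ncard_insert_of_notMem, ncard_range_fin]
    · omega
    · intro a b hab
      have := congrArg Fin.val hab
      simp at this
      exact Fin.ext (by omega)
    all_goals
      simp only [Set.mem_insert_iff, Set.mem_range, not_or, not_exists, Fin.ext_iff]
      repeat' apply And.intro
      all_goals first
        | (intro j; have := j.isLt; omega)
        | omega
  have hdom : IsDomSet (cycleGraph n) D := by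
    intro v hv
    simp only [hD, Set.mem_setOf_eq] at hv
    push_neg at hv
    have hvlt := v.isLt
    by_cases h1 : v.val % 3 = 1
    · refine ⟨⟨5, by omega⟩, by simp [hD], ?_⟩
      rw [cycle_adj hn3]; simp; omega
    · by_cases h2 : v.val % 3 = 2
      · refine ⟨⟨v.val-1, by omega⟩, by simp [hD]; omega, ?_⟩
        rw [cycle_adj hn3]; simp; try omega
      · by_cases h3 : v.val = 3
        · refine ⟨⟨2, by omega⟩, by simp [hD], ?_⟩
          rw [cycle_adj hn3]; simp; omega
        · by_cases h6 : v.val = 6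
          · refine ⟨⟨5, by omega⟩, by simp [hD], ?_⟩
            rw [cycle_adj hn3]; simp; omega
          · by_cases hlast : v.val = 3*m
            · refine ⟨⟨0, by omega⟩, by simp [hD], ?_⟩
              rw [cycle_adj hn3]; simp; omega
            · refine ⟨⟨v.val+1, by omega⟩, by simp [hD]; omega, ?_⟩
              rw [cycle_adj hn3]; simp; try omega
  apply not_eulerian_full D hdom (by omega) x0 (by simp [hD, hx0])
  · intro v hv
    simp only [Set.mem_diff, Set.mem_singleton_iff, hD, Set.mem_setOf_eq, not_and,
      Decidable.not_not] at hv
    have hvlt := v.isLt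
    have hvnotD : ∀ h : v.val = 0 ∨ v.val = 1 ∨ v.val = 2 ∨ v.val = 5 ∨
        (v.val % 3 = 1 ∧ 7 ≤ v.val), v.val = 1 := by
      intro h
      have := congrArg Fin.val (hv h)
      simpa [hx0] using this
    by_cases h1 : v.val = 1
    · refine ⟨⟨0, by omega⟩, ⟨by simp [hD], ?_⟩, ?_⟩
      · intro h; have := congrArg Fin.val h; simp [hx0] at this
      · rw [cycle_adj hn3]; simp; omega
    · have hv0 : v.val ≠ 0 := fun h => by have := hvnotD (Or.inl h); omega
      have hv2 : v.val ≠ 2 := fun h => by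
        have := hvnotD (Or.inr (Or.inr (Or.inl h))); omega
      have hv5 : v.val ≠ 5 := fun h => by
        have := hvnotD (Or.inr (Or.inr (Or.inr (Or.inl h)))); omega
      have hv17 : ¬ (v.val % 3 = 1 ∧ 7 ≤ v.val) := fun h => by
        have := hvnotD (Or.inr (Or.inr (Or.inr (Or.inr h)))); omega
      by_cases hr1 : v.val % 3 = 1
      · -- v.val = 4
        have hv4 : v.val = 4 := by omega
        refine ⟨⟨5, by omega⟩, ⟨by simp [hD], ?_⟩, ?_⟩
        · intro h; have := congrArg Fin.val h; simp [hx0] at this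
        · rw [cycle_adj hn3]; simp; omega
      · by_cases hr2 : v.val % 3 = 2
        · -- v.val ≥ 8
          refine ⟨⟨v.val-1, by omega⟩, ⟨by simp [hD]; omega, ?_⟩, ?_⟩
          · intro h; have := congrArg Fin.val h; simp [hx0] at this; omega
          · rw [cycle_adj hn3]; simp; try omega
        · -- v.val % 3 = 0
          by_cases h3 : v.val = 3
          · refine ⟨⟨2, by omega⟩, ⟨by simp [hD], ?_⟩, ?_⟩
            · intro h; have := congrArg Fin.val h; simp [hx0] at this
            · rw [cycle_adj hn3]; simp; omega
          · by_cases h6 : v.val = 6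
            · refine ⟨⟨5, by omega⟩, ⟨by simp [hD], ?_⟩, ?_⟩
              · intro h; have := congrArg Fin.val h; simp [hx0] at this
              · rw [cycle_adj hn3]; simp; omega
            · by_cases hlast : v.val = 3*m
              · refine ⟨⟨0, by omega⟩, ⟨by simp [hD], ?_⟩, ?_⟩
                · intro h; have := congrArg Fin.val h; simp [hx0] at this
                · rw [cycle_adj hn3]; simp; omega
              · refine ⟨⟨v.val+1, by omega⟩, ⟨by simp [hD]; omega, ?_⟩, ?_⟩
                · intro h; have := congrArg Fin.val h; simp [hx0, -Fin.val_eq_zero_iff] at this; omega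
                · rw [cycle_adj hn3]; simp; try omega
  · intro x hx hdomx
    by_contra hne
    have hxval : x.val ≠ 1 := fun h => hne (Fin.ext (by simp [hx0]; omega))
    have hxlt := x.isLt
    simp only [hD, Set.mem_setOf_eq] at hx
    have key : ∀ w : Fin n, w ∉ D \ {x} →
        ∃ u, (u ∈ D ∧ u ≠ x) ∧ (cycleGraph n).Adj u w := by
      intro w hw
      obtain ⟨u, hu, hadj⟩ := hdomx w hw
      exact ⟨u, ⟨hu.1, hu.2⟩, hadj⟩
    rcases hx with h | h | h | h | ⟨ha, hb⟩
    · obtain ⟨u, hu, hadj⟩ := key ⟨3*m, by omega⟩ (by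
        simp only [Set.mem_diff, Set.mem_singleton_iff, hD, Set.mem_setOf_eq]
        intro hcon
        rcases hcon.1 with h' | h' | h' | h' | h' <;> omega)
      simp only [hD, Set.mem_setOf_eq] at hu
      have huval : u.val ≠ x.val := fun hh => hu.2 (Fin.ext hh)
      have := u.isLt
      rw [cycle_adj hn3] at hadj
      simp [-Fin.val_eq_zero_iff] at hadj
      rcases hu.1 with h' | h' | h' | h' | h' <;> omega
    · omega
    · obtain ⟨u, hu, hadj⟩ := key ⟨3, by omega⟩ (by
        simp only [Set.mem_diff, Set.mem_singleton_iff, hD, Set.mem_setOf_eq]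
        intro hcon
        rcases hcon.1 with h' | h' | h' | h' | h' <;> omega)
      simp only [hD, Set.mem_setOf_eq] at hu
      have huval : u.val ≠ x.val := fun hh => hu.2 (Fin.ext hh)
      have := u.isLt
      rw [cycle_adj hn3] at hadj
      simp at hadj
      rcases hu.1 with h' | h' | h' | h' | h' <;> omega
    · obtain ⟨u, hu, hadj⟩ := key ⟨4, by omega⟩ (by
        simp only [Set.mem_diff, Set.mem_singleton_iff, hD, Set.mem_setOf_eq]
        intro hcon
        rcases hcon.1 with h' | h' | h' | h' | h' <;> omega)
      simp only [hD, Set.mem_setOf_eq] at hu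
      have huval : u.val ≠ x.val := fun hh => hu.2 (Fin.ext hh)
      have := u.isLt
      rw [cycle_adj hn3] at hadj
      simp at hadj
      rcases hu.1 with h' | h' | h' | h' | h' <;> omega
    · obtain ⟨u, hu, hadj⟩ := key ⟨x.val+1, by omega⟩ (by
        simp only [Set.mem_diff, Set.mem_singleton_iff, hD, Set.mem_setOf_eq]
        intro hcon
        rcases hcon.1 with h' | h' | h' | h' | h' <;> omega)
      simp only [hD, Set.mem_setOf_eq] at hu
      have huval : u.val ≠ x.val := fun hh => hu.2 (Fin.ext hh)
      have := u.isLt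
      rw [cycle_adj hn3] at hadj
      simp at hadj
      rcases hu.1 with h' | h' | h' | h' | h' <;> omega


/-- Finset version of domination for the cycle graph. -/
def FinDom (n : ℕ) (s : Finset (Fin n)) : Prop :=
  ∀ v : Fin n, v ∉ s → ∃ u ∈ s, (cycleGraph n).Adj u v

instance (n : ℕ) : DecidablePred (FinDom n) := fun s =>
  inferInstanceAs (Decidable (∀ _, _))

def FinDomGraph (n k : ℕ) : SimpleGraph {s : Finset (Fin n) // FinDom n s ∧ s.card ≤ k} where
  Adj A B := (symmDiff A.1 B.1).card = 1
  symm := ⟨fun A B h => by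
    have h' : (symmDiff A.1 B.1).card = 1 := h
    show (symmDiff B.1 A.1).card = 1
    rwa [symmDiff_comm]⟩
  loopless := ⟨fun A h => by
    have h' : (symmDiff A.1 A.1).card = 1 := h
    simp [symmDiff_self] at h'⟩

instance (n k : ℕ) : DecidableRel (FinDomGraph n k).Adj :=
  fun A B => inferInstanceAs (Decidable (_ = 1))

lemma finDom_iff (n : ℕ) (s : Finset (Fin n)) : IsDomSet (cycleGraph n) ↑s ↔ FinDom n s := by
  simp [IsDomSet, FinDom]

noncomputable def domEquiv (n k : ℕ) :
    {D : Set (Fin n) // IsDomSet (cycleGraph n) D ∧ D.ncard ≤ k} ≃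
      {s : Finset (Fin n) // FinDom n s ∧ s.card ≤ k} where
  toFun := fun ⟨D, hD⟩ => ⟨D.toFinite.toFinset, by
    rw [← finDom_iff, Set.Finite.coe_toFinset, ← Set.ncard_coe_finset, Set.Finite.coe_toFinset]
    exact hD⟩
  invFun := fun ⟨s, hs⟩ => ⟨↑s, by rw [finDom_iff, Set.ncard_coe_finset]; exact hs⟩
  left_inv := fun ⟨D, hD⟩ => by simp [Set.Finite.coe_toFinset]
  right_inv := fun ⟨s, hs⟩ => by
    apply Subtype.ext
    apply Finset.coe_injective
    simp [Set.Finite.coe_toFinset]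

noncomputable def domIso (n k : ℕ) :
    (KDomGraph (cycleGraph n) k) ≃g (FinDomGraph n k) where
  toEquiv := domEquiv n k
  map_rel_iff' := by
    rintro ⟨D, hD⟩ ⟨E, hE⟩
    show (symmDiff D.toFinite.toFinset E.toFinite.toFinset).card = 1 ↔ (symmDiff D E).ncard = 1
    rw [← Set.ncard_coe_finset, Finset.coe_symmDiff, Set.Finite.coe_toFinset,
      Set.Finite.coe_toFinset]

lemma isEulerian_iff_of_iso {W W' : Type*} {H : SimpleGraph W} {H' : SimpleGraph W'}
    (f : H ≃g H') : IsEulerian H ↔ IsEulerian H' := by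
  constructor
  · rintro ⟨he, hr⟩
    constructor
    · intro v
      have := he (f.symm v)
      rwa [← Nat.card_coe_set_eq, Nat.card_congr (f.mapNeighborSet (f.symm v)),
        Nat.card_coe_set_eq, f.apply_symm_apply] at this
    · intro u v x y hu hx
      have := hr (f.symm u) (f.symm v) (f.symm x) (f.symm y)
        (by rwa [← f.map_rel_iff, f.apply_symm_apply, f.apply_symm_apply])
        (by rwa [← f.map_rel_iff, f.apply_symm_apply, f.apply_symm_apply])
      have := this.map f.toHom
      simpa using this
  · rintro ⟨he, hr⟩
    constructor
    · intro v
      have := he (f v)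
      rwa [← Nat.card_coe_set_eq, Nat.card_congr (f.mapNeighborSet v).symm,
        Nat.card_coe_set_eq] at this
    · intro u v x y hu hx
      have := hr (f u) (f v) (f x) (f y) (f.map_adj_iff.mpr hu) (f.map_adj_iff.mpr hx)
      have := this.map f.symm.toHom
      simpa using this

lemma findom_neighborSet_ncard {n k : ℕ} (v : {s : Finset (Fin n) // FinDom n s ∧ s.card ≤ k}) :
    ((FinDomGraph n k).neighborSet v).ncard = (FinDomGraph n k).degree v :=
  Set.ncard_eq_toFinset_card' _

lemma chain'_reachable {W : Type*} (H : SimpleGraph W) :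
    ∀ (L : List W), L.Chain' H.Adj → ∀ a ∈ L, ∀ b ∈ L, H.Reachable a b := by
  intro L
  induction L with
  | nil => intro _ a ha; simp at ha
  | cons x xs ih =>
    intro hc
    have key : ∀ b ∈ x :: xs, H.Reachable x b := by
      intro b hb
      rcases List.mem_cons.mp hb with rfl | hb
      · exact Reachable.refl _
      · match xs, hb, hc with
        | y :: ys, hb, hc =>
          have h1 := List.isChain_cons_cons.mp hc
          exact (h1.1.reachable).trans (ih h1.2 y (by simp) b hb)
    intro a ha b hb
    exact (key a ha).symm.trans (key b hb)

lemma reachable_of_walkList {n k : ℕ} (L : List (Finset (Fin n)))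
    (hmem : ∀ s ∈ L, FinDom n s ∧ s.card ≤ k)
    (hchain : L.Chain' (fun s t => (symmDiff s t).card = 1))
    (hcover : ∀ v : {s : Finset (Fin n) // FinDom n s ∧ s.card ≤ k}, v.1 ∈ L) :
    ∀ u x : {s : Finset (Fin n) // FinDom n s ∧ s.card ≤ k},
      (FinDomGraph n k).Reachable u x := by
  intro u x
  set L' : List {s : Finset (Fin n) // FinDom n s ∧ s.card ≤ k} :=
    L.pmap (fun s h => ⟨s, h⟩) hmem with hL'
  have hmap : L'.map Subtype.val = L := by
    rw [hL', List.map_pmap]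
    exact (List.pmap_eq_map (f := id) (l := L) hmem).trans (List.map_id L)
  have hchain' : L'.Chain' (FinDomGraph n k).Adj := by
    have := (List.isChain_map (Subtype.val :
      {s : Finset (Fin n) // FinDom n s ∧ s.card ≤ k} → Finset (Fin n))
      (R := fun s t => (symmDiff s t).card = 1) (l := L')).mp (by rw [hmap]; exact hchain)
    exact this
  have hmem' : ∀ v : {s : Finset (Fin n) // FinDom n s ∧ s.card ≤ k}, v ∈ L' := by
    intro v
    rw [hL', List.mem_pmap]
    exact ⟨v.1, hcover v, rfl⟩
  exact chain'_reachable _ L' hchain' u (hmem' u) x (hmem' x)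

lemma finDomGraph_eulerian (n k : ℕ) (L : List (Finset (Fin n)))
    (hmem : ∀ s ∈ L, FinDom n s ∧ s.card ≤ k)
    (hchain : L.Chain' (fun s t => (symmDiff s t).card = 1))
    (hcover : ∀ v : {s : Finset (Fin n) // FinDom n s ∧ s.card ≤ k}, v.1 ∈ L)
    (heven : ∀ v, Even ((FinDomGraph n k).degree v)) :
    IsEulerian (FinDomGraph n k) := by
  refine ⟨fun v => ?_, fun u v x y _ _ => reachable_of_walkList L hmem hchain hcover u x⟩
  rw [findom_neighborSet_ncard]
  exact heven v

lemma not_eulerian_of_odd (n k : ℕ)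
    (hodd : ¬ ∀ v, Even ((FinDomGraph n k).degree v)) :
    ¬ IsEulerian (KDomGraph (cycleGraph n) k) := by
  rw [isEulerian_iff_of_iso (domIso n k)]
  rintro ⟨he, -⟩
  exact hodd (fun v => by rw [← findom_neighborSet_ncard]; exact he v)

set_option maxHeartbeats 2000000
set_option maxRecDepth 20000

lemma eulerian_3_2 : IsEulerian (KDomGraph (cycleGraph 3) 2) := by
  rw [isEulerian_iff_of_iso (domIso 3 2)]
  exact finDomGraph_eulerian 3 2
    [{0}, {0,1}, {1}, {1,2}, {2}, {0,2}, {2}, {1,2}, {1}, {0,1}, {0}]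
    (by decide) (by unfold List.Chain'; decide) (by decide) (by decide)

lemma eulerian_7_4 : IsEulerian (KDomGraph (cycleGraph 7) 4) := by
  rw [isEulerian_iff_of_iso (domIso 7 4)]
  exact finDomGraph_eulerian 7 4
    [{0,1,4}, {0,1,2,4}, {0,2,4}, {0,2,3,4}, {0,3,4}, {0,1,3,4}, {0,3,4}, {0,3,4,5}, {0,3,5}, {0,1,3,5}, {1,3,5}, {1,2,3,5}, {1,2,5}, {0,1,2,5}, {0,2,5}, {0,2,3,5}, {0,2,5}, {0,2,4,5}, {0,2,5}, {0,2,5,6}, {2,5,6}, {1,2,5,6}, {2,5,6}, {2,3,5,6}, {2,3,6}, {0,2,3,6}, {0,3,6}, {0,1,3,6}, {1,3,6}, {1,2,3,6}, {1,3,6}, {1,3,4,6}, {1,4,6}, {0,1,4,6}, {1,4,6}, {1,2,4,6}, {2,4,6}, {0,2,4,6}, {2,4,6}, {2,3,4,6}, {2,4,6}, {2,4,5,6}, {2,4,6}, {1,2,4,6}, {1,4,6}, {1,4,5,6}, {1,4,5}, {0,1,4,5}, {1,4,5}, {1,2,4,5}, {1,4,5}, {1,3,4,5}, {1,4,5}, {1,4,5,6},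 {1,4,6}, {1,3,4,6}, {1,3,6}, {1,3,5,6}, {1,3,6}, {0,1,3,6}, {0,3,6}, {0,3,4,6}, {0,3,6}, {0,3,5,6}, {0,3,6}, {0,2,3,6}, {2,3,6}, {2,3,5,6}, {2,5,6}, {0,2,5,6}, {0,2,5}, {0,1,2,5}, {1,2,5}, {1,2,3,5}, {1,3,5}, {0,1,3,5}, {0,3,5}, {0,3,4,5}, {0,3,4}, {0,2,3,4}, {0,2,4}, {0,1,2,4}, {0,1,4}]
    (by decide) (by unfold List.Chain'; decide) (by decide) (by decide)

lemma not_eulerian_4_3 : ¬ IsEulerian (KDomGraph (cycleGraph 4) 3) :=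
  not_eulerian_of_odd 4 3 (by decide)

lemma not_eulerian_7_5 : ¬ IsEulerian (KDomGraph (cycleGraph 7) 5) :=
  not_eulerian_of_odd 7 5 (by decide)

lemma not_eulerian_7_6 : ¬ IsEulerian (KDomGraph (cycleGraph 7) 6) :=
  not_eulerian_of_odd 7 6 (by decide)


/-- For `n ≥ 3` and `⌈n/3⌉ < k < n`, the `k`-dominating graph of the cycle `C_n` is
Eulerian iff `n = 7` and `k = 4`, or `n = 3` and `k = 2`. -/
theorem kDomGraph_cycle_eulerian_iff (n k : ℕ) (hn : 3 ≤ n)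
    (hk1 : (n + 2) / 3 < k) (hk2 : k < n) :
    IsEulerian (KDomGraph (SimpleGraph.cycleGraph n) k) ↔
      (n = 7 ∧ k = 4) ∨ (n = 3 ∧ k = 2) := by
  have h3 : n % 3 = 0 ∨ n % 3 = 1 ∨ n % 3 = 2 := by omega
  rcases h3 with hr | hr | hr
  · -- n = 3m
    obtain ⟨m, rfl⟩ : ∃ m, n = 3 * m := ⟨n / 3, by omega⟩
    by_cases hm1 : m = 1
    · subst hm1
      have hk' : k = 2 := by omega
      subst hk'
      norm_num
      exact eulerian_3_2
    · have hm2 : 2 ≤ m := by omega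
      constructor
      · intro hE
        exfalso
        rcases eq_or_lt_of_le (show m + 1 ≤ k by omega) with hke | hkl
        · exact witness2 m k hm2 hke.symm hE
        · exact witness3 m k hm2 (by omega) hE
      · rintro (⟨h, -⟩ | ⟨h, -⟩) <;> omega
  · -- n = 3m + 1
    obtain ⟨m, rfl⟩ : ∃ m, n = 3 * m + 1 := ⟨n / 3, by omega⟩
    by_cases hm1 : m = 1
    · subst hm1
      have hk' : k = 3 := by omega
      subst hk'
      constructor
      · intro hE
        exact absurd hE not_eulerian_4_3
      · rintro (⟨h, -⟩ | ⟨h, -⟩) <;> omega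
    · by_cases hm2 : m = 2
      · subst hm2
        have hk' : k = 4 ∨ k = 5 ∨ k = 6 := by omega
        rcases hk' with rfl | rfl | rfl
        · constructor
          · intro _
            exact Or.inl ⟨rfl, rfl⟩
          · intro _
            exact eulerian_7_4
        · constructor
          · intro hE
            exact absurd hE not_eulerian_7_5
          · rintro (⟨h, hh⟩ | ⟨h, -⟩) <;> omega
        · constructor
          · intro hE
            exact absurd hE not_eulerian_7_6
          · rintro (⟨h, hh⟩ | ⟨h, -⟩) <;> omega
      · have hm3 : 3 ≤ m := by omega
        constructor
        · intro hE
          exfalso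
          rcases eq_or_lt_of_le (show m + 2 ≤ k by omega) with hke | hkl
          · exact witness5 m k hm3 hke.symm hE
          · exact witness6 m k hm3 (by omega) hE
        · rintro (⟨h, -⟩ | ⟨h, -⟩) <;> omega
  · -- n = 3m + 2
    obtain ⟨m, rfl⟩ : ∃ m, n = 3 * m + 2 := ⟨n / 3, by omega⟩
    constructor
    · intro hE
      exact absurd hE (witness1 m k (by omega) (by omega))
    · rintro (⟨h, -⟩ | ⟨h, -⟩) <;> omega
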